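/- Let M be a Coxeter matrix on a finite set S = {1,…,n} and let W(M) be its Coxeter group. On ℝ^n with standard basis α_1,…,α_n, define the bilinear form B(α_i, α_i) = 2, B(α_i, α_j) = −2·cos(π/m_{ij}) if i ≠ j and m_{ij} < ∞, and B(α_i, α_j) = −2 if m_{ij} = ∞, and let r_i : ℝ^n → ℝ^n be the reflection r_i(v) = v − B(α_i, v) α_i. Then there is a unique group homomorphism ρ : W(M) → GL_n(ℝ) with ρ(s_i) = r_i, and this geometric representation ρ is injective. -/

import Mathlib

noncomputable def geomPairing {n : ℕ} (M : CoxeterMatrix (Fin n)) (i j : Fin n) : ℝ :=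
  if i = j then 2
  else if M i j = 0 then -2
  else -(2 * Real.cos (Real.pi / (M i j)))

noncomputable def geomRefl {n : ℕ} (M : CoxeterMatrix (Fin n)) (i : Fin n) :
    Matrix (Fin n) (Fin n) ℝ :=
  Matrix.of fun k j =>
    (if k = j then 1 else 0) - geomPairing M i j * (if k = i then 1 else 0)

namespace GeomAux
open Matrix

variable {n : ℕ} (M : CoxeterMatrix (Fin n))

theorem pairing_diag (i : Fin n) : geomPairing M i i = 2 := by simp [geomPairing]

theorem pairing_symm (i j : Fin n) : geomPairing M i j = geomPairing M j i := by
  unfold geomPairing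
  rcases eq_or_ne i j with h | h
  · simp [h]
  · simp [h, h.symm, M.symmetric i j]

/-- pairing value in terms of `cc`. -/
theorem pairing_ne (i j : Fin n) (hij : i ≠ j) :
    geomPairing M i j = if M i j = 0 then -2 else -(2 * Real.cos (Real.pi / (M i j))) := by
  simp [geomPairing, hij]

theorem refl_mulVec (i : Fin n) (v : Fin n → ℝ) :
    geomRefl M i *ᵥ v = v - (∑ t, geomPairing M i t * v t) • (Pi.single i 1 : Fin n → ℝ) := by
  ext k
  simp only [Matrix.mulVec, dotProduct, geomRefl, Matrix.of_apply, Pi.sub_apply,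
    Pi.smul_apply, smul_eq_mul]
  rw [Finset.sum_congr rfl (fun t _ => by ring_nf :
    ∀ t ∈ Finset.univ, ((if k = t then (1:ℝ) else 0) - geomPairing M i t * (if k = i then 1 else 0)) * v t
      = (if k = t then (1:ℝ) else 0) * v t - (if k = i then (1:ℝ) else 0) * (geomPairing M i t * v t))]
  rw [Finset.sum_sub_distrib]
  rw [← Finset.mul_sum]
  simp [Pi.single_apply]

theorem refl_sq (i : Fin n) : geomRefl M i * geomRefl M i = 1 := by
  have h : ∀ v : Fin n → ℝ, (geomRefl M i * geomRefl M i) *ᵥ v = v := by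
    intro v
    rw [← Matrix.mulVec_mulVec, refl_mulVec, refl_mulVec]
    have hsum : ∑ t, geomPairing M i t *
        (v - (∑ t, geomPairing M i t * v t) • (Pi.single i 1 : Fin n → ℝ)) t
        = - (∑ t, geomPairing M i t * v t) := by
      simp only [Pi.sub_apply, Pi.smul_apply, smul_eq_mul]
      rw [Finset.sum_congr rfl (fun t _ => mul_sub _ _ _), Finset.sum_sub_distrib]
      have : ∑ t, geomPairing M i t * ((∑ t, geomPairing M i t * v t) * (Pi.single i 1 : Fin n → ℝ) t)
          = 2 * ∑ t, geomPairing M i t * v t := by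
        rw [Finset.sum_eq_single i]
        · simp [pairing_diag]
        · intro b _ hb; simp [Pi.single_apply, hb]
        · simp
      rw [this]; ring
    rw [hsum]
    ext k
    simp only [Pi.sub_apply, Pi.smul_apply, smul_eq_mul]
    ring
  ext k l
  have := congrFun (h (Pi.single l 1)) k
  simpa [Matrix.mulVec_single, Matrix.one_apply, Pi.single_apply, eq_comm] using this


theorem trig_step (A t : ℝ) :
    2 * Real.cos t * Real.sin A - Real.sin (A - t) = Real.sin (A + t) := by
  rw [Real.sin_add, Real.sin_sub]; ring

/-- The coefficient sequence for alternating products of two reflections. -/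
noncomputable def seqXY (cc : ℝ) : ℕ → ℝ × ℝ
  | 0 => (1, 0)
  | (k+1) => if Even k then ((seqXY cc k).1, cc * (seqXY cc k).1 - (seqXY cc k).2)
             else (cc * (seqXY cc k).2 - (seqXY cc k).1, (seqXY cc k).2)

theorem sum_pair (l i j : Fin n) (hij : i ≠ j) (x y : ℝ) :
    ∑ t, geomPairing M l t *
      (x • (Pi.single i 1 : Fin n → ℝ) + y • (Pi.single j 1 : Fin n → ℝ)) t
      = x * geomPairing M l i + y * geomPairing M l j := by
  have e : ∀ t, geomPairing M l t *
      (x • (Pi.single i 1 : Fin n → ℝ) + y • (Pi.single j 1 : Fin n → ℝ)) t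
      = (if t = i then geomPairing M l i * x else 0)
        + (if t = j then geomPairing M l j * y else 0) := by
    intro t
    by_cases h : t = i
    · subst h
      simp [Pi.single_apply, hij]
    · by_cases h2 : t = j
      · subst h2
        simp [Pi.single_apply, h, Ne.symm (by simpa [eq_comm] using h : i ≠ t)]
      · simp [Pi.single_apply, h, h2]
  rw [Finset.sum_congr rfl (fun t _ => e t), Finset.sum_add_distrib,
    Finset.sum_ite_eq' Finset.univ i (fun t => geomPairing M l i * x),
    Finset.sum_ite_eq' Finset.univ j (fun t => geomPairing M l j * y)]
  simp [mul_comm]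

theorem alt_mulVec (i j : Fin n) (hij : i ≠ j) (k : ℕ) :
    ((CoxeterSystem.alternatingWord i j k).map (geomRefl M)).prod *ᵥ (Pi.single i 1 : Fin n → ℝ)
      = (seqXY (-geomPairing M i j) k).1 • (Pi.single i 1 : Fin n → ℝ)
        + (seqXY (-geomPairing M i j) k).2 • (Pi.single j 1 : Fin n → ℝ) := by
  set cc := -geomPairing M i j with hcc
  induction k with
  | zero =>
      simp only [CoxeterSystem.alternatingWord, List.map_nil, List.prod_nil, seqXY]
      ext k
      simp [Matrix.mulVec, Matrix.one_apply, Pi.single_apply, eq_comm]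
  | succ k ih =>
      rw [CoxeterSystem.alternatingWord_succ', List.map_cons, List.prod_cons,
        ← Matrix.mulVec_mulVec, ih, seqXY]
      rcases Nat.even_or_odd k with hk | hk
      · rw [if_pos hk, if_pos hk, refl_mulVec, sum_pair M j i j hij]
        have h1 : geomPairing M j i = -cc := by rw [hcc, pairing_symm]; ring
        have h2 : geomPairing M j j = 2 := pairing_diag M j
        rw [h1, h2]
        ext t
        simp only [Pi.add_apply, Pi.sub_apply, Pi.smul_apply, smul_eq_mul]
        ring
      · rw [if_neg (Nat.not_even_iff_odd.mpr hk), if_neg (Nat.not_even_iff_odd.mpr hk),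
          refl_mulVec, sum_pair M i i j hij]
        have h1 : geomPairing M i j = -cc := by rw [hcc]; ring
        have h2 : geomPairing M i i = 2 := pairing_diag M i
        rw [h1, h2]
        ext t
        simp only [Pi.add_apply, Pi.sub_apply, Pi.smul_apply, smul_eq_mul]
        ring

theorem seqXY_two (k : ℕ) :
    seqXY 2 k = if Even k then ((k:ℝ)+1, (k:ℝ)) else ((k:ℝ), (k:ℝ)+1) := by
  induction k with
  | zero => simp [seqXY]
  | succ k ih =>
      rcases Nat.even_or_odd k with hk | hk
      · rw [seqXY, if_pos hk, ih, if_pos hk,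
          if_neg (by simp [Nat.even_add_one, hk])]
        simp only [Prod.mk.injEq]
        push_cast
        constructor <;> ring
      · rw [seqXY, if_neg (Nat.not_even_iff_odd.mpr hk), ih,
          if_neg (Nat.not_even_iff_odd.mpr hk),
          if_pos (Nat.even_add_one.mpr (Nat.not_even_iff_odd.mpr hk))]
        simp only [Prod.mk.injEq]
        push_cast
        constructor <;> ring

theorem trig_div {t : ℝ} (ht : Real.sin t ≠ 0) (A : ℝ) :
    2 * Real.cos t * (Real.sin A / Real.sin t) - Real.sin (A - t) / Real.sin t
      = Real.sin (A + t) / Real.sin t := by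
  rw [← mul_div_assoc, div_sub_div_same, trig_step]

theorem seqXY_cos (t : ℝ) (ht : Real.sin t ≠ 0) (k : ℕ) :
    seqXY (2 * Real.cos t) k =
      if Even k then (Real.sin (((k:ℝ)+1)*t) / Real.sin t, Real.sin ((k:ℝ)*t) / Real.sin t)
      else (Real.sin ((k:ℝ)*t) / Real.sin t, Real.sin (((k:ℝ)+1)*t) / Real.sin t) := by
  induction k with
  | zero => simp [seqXY, div_self ht]
  | succ k ih =>
      have e1 : ((k:ℝ)+1+1)*t = ((k:ℝ)+1)*t + t := by ring
      have e2 : (k:ℝ)*t = ((k:ℝ)+1)*t - t := by ring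
      rcases Nat.even_or_odd k with hk | hk
      · rw [seqXY, if_pos hk, ih, if_pos hk,
          if_neg (by simp [Nat.even_add_one, hk])]
        simp only [Prod.mk.injEq]
        push_cast
        refine ⟨rfl, ?_⟩
        rw [e1, ← trig_div ht (((k:ℝ)+1)*t), ← e2]
      · rw [seqXY, if_neg (Nat.not_even_iff_odd.mpr hk), ih,
          if_neg (Nat.not_even_iff_odd.mpr hk),
          if_pos (Nat.even_add_one.mpr (Nat.not_even_iff_odd.mpr hk))]
        simp only [Prod.mk.injEq]
        push_cast
        refine ⟨?_, rfl⟩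
        rw [e1, ← trig_div ht (((k:ℝ)+1)*t), ← e2]


theorem two_le_M (i j : Fin n) (hij : i ≠ j) (hM : M i j ≠ 0) : 2 ≤ M i j := by
  rcases Nat.lt_or_ge (M i j) 2 with h | h
  · interval_cases h' : M i j
    · exact absurd rfl hM
    · exact absurd h' (M.off_diagonal i j hij)
  · exact h

theorem theta_pos {m : ℕ} (hm : 2 ≤ m) : 0 < Real.pi / m :=
  div_pos Real.pi_pos (by positivity)

theorem sin_theta_pos {m : ℕ} (hm : 2 ≤ m) : 0 < Real.sin (Real.pi / m) := by
  apply Real.sin_pos_of_pos_of_lt_pi (theta_pos hm)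
  have h2 : (2:ℝ) ≤ (m:ℝ) := by exact_mod_cast hm
  have h0 : (0:ℝ) < (m:ℝ) := by linarith
  rw [div_lt_iff₀ h0]
  nlinarith [Real.pi_pos]

theorem seq_nonneg (i j : Fin n) (hij : i ≠ j) (k : ℕ)
    (hk : M i j = 0 ∨ k < M i j) :
    0 ≤ (seqXY (-geomPairing M i j) k).1 ∧ 0 ≤ (seqXY (-geomPairing M i j) k).2 := by
  rcases eq_or_ne (M i j) 0 with h0 | h0
  · have hcc : -geomPairing M i j = 2 := by simp [geomPairing, hij, h0]
    rw [hcc, seqXY_two]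
    rcases Nat.even_or_odd k with hk' | hk' <;>
      simp [hk', Nat.not_even_iff_odd.mpr, hk'] <;> positivity
  · have hm : 2 ≤ M i j := two_le_M M i j hij h0
    set m := M i j with hmdef
    set t := Real.pi / m with htdef
    have hspos := sin_theta_pos (m := m) hm
    have hcc : -geomPairing M i j = 2 * Real.cos t := by
      simp [geomPairing, hij, ← hmdef, h0, htdef]
    have hkm : k < m := hk.resolve_left h0
    have htub : ((k:ℝ) + 1) * t ≤ Real.pi := by
      have h1 : ((k:ℝ) + 1) ≤ (m:ℝ) := by exact_mod_cast hkm
      have : ((k:ℝ) + 1) * t ≤ (m:ℝ) * t :=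
        mul_le_mul_of_nonneg_right h1 (le_of_lt (theta_pos hm))
      calc ((k:ℝ) + 1) * t ≤ (m:ℝ) * t := this
        _ = Real.pi := by
            rw [htdef]
            field_simp
    have hsk : 0 ≤ Real.sin ((k:ℝ) * t) := by
      apply Real.sin_nonneg_of_nonneg_of_le_pi
      · positivity
      · nlinarith [theta_pos (m := m) hm]
    have hsk1 : 0 ≤ Real.sin (((k:ℝ)+1) * t) :=
      Real.sin_nonneg_of_nonneg_of_le_pi (by positivity) htub
    rw [hcc, seqXY_cos t (ne_of_gt hspos)]
    rcases Nat.even_or_odd k with hk' | hk' <;>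
      simp [hk', Nat.not_even_iff_odd.mpr] <;>
      constructor <;> positivity


/-! ### Order of products of two reflections -/

theorem ext_col {A B : Matrix (Fin n) (Fin n) ℝ}
    (h : ∀ l, A *ᵥ (Pi.single l 1 : Fin n → ℝ) = B *ᵥ (Pi.single l 1 : Fin n → ℝ)) : A = B := by
  ext k l
  have := congrFun (h l) k
  simpa [Matrix.mulVec_single] using this

theorem sum_single_right (f : Fin n → ℝ) (r : Fin n) :
    ∑ t, f t * (Pi.single r 1 : Fin n → ℝ) t = f r := by
  simp [Pi.single_apply, mul_ite, Finset.sum_ite_eq']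

noncomputable def phiM (i j : Fin n) : Matrix (Fin n) (Fin 2) ℝ :=
  Matrix.of fun k a => if a = 0 then (Pi.single i 1 : Fin n → ℝ) k
    else (Pi.single j 1 : Fin n → ℝ) k

noncomputable def lM (M : CoxeterMatrix (Fin n)) (i j : Fin n) : Matrix (Fin 2) (Fin n) ℝ :=
  Matrix.of fun a t => if a = 0
    then -(geomPairing M i t + (-geomPairing M i j) * geomPairing M j t)
    else -(geomPairing M j t)

noncomputable def p2M (cc : ℝ) : Matrix (Fin 2) (Fin 2) ℝ := !![cc^2-1, -cc; cc, -1]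

theorem phi_mulVec (i j : Fin n) (w : Fin 2 → ℝ) :
    phiM i j *ᵥ w = w 0 • (Pi.single i 1 : Fin n → ℝ) + w 1 • (Pi.single j 1 : Fin n → ℝ) := by
  ext k
  simp [phiM, Matrix.mulVec, dotProduct, Fin.sum_univ_two, mul_comm]

theorem refl_prod_eq (i j : Fin n) :
    geomRefl M i * geomRefl M j = 1 + phiM i j * lM M i j := by
  apply ext_col
  intro l
  set cc := -geomPairing M i j with hcc
  rw [← Matrix.mulVec_mulVec]
  rw [refl_mulVec M j, sum_single_right]
  rw [refl_mulVec M i]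
  have hsum : ∑ t, geomPairing M i t *
      ((Pi.single l 1 : Fin n → ℝ) - geomPairing M j l • (Pi.single j 1 : Fin n → ℝ)) t
      = geomPairing M i l - geomPairing M j l * geomPairing M i j := by
    simp only [Pi.sub_apply, Pi.smul_apply, smul_eq_mul, mul_sub, Finset.sum_sub_distrib]
    rw [sum_single_right]
    congr 1
    rw [Finset.sum_congr rfl (fun t _ => by ring :
      ∀ t ∈ Finset.univ, geomPairing M i t * (geomPairing M j l * (Pi.single j 1 : Fin n → ℝ) t)
        = geomPairing M j l * (geomPairing M i t * (Pi.single j 1 : Fin n → ℝ) t)), ← Finset.mul_sum,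
      sum_single_right]
  rw [hsum]
  rw [Matrix.add_mulVec, Matrix.one_mulVec, ← Matrix.mulVec_mulVec, Matrix.mulVec_single,
    phi_mulVec]
  ext t
  simp only [Pi.add_apply, Pi.sub_apply, Pi.smul_apply, smul_eq_mul, lM, Matrix.of_apply]
  norm_num
  ring

theorem lM_mul_phiM (i j : Fin n) (hij : i ≠ j) :
    lM M i j * phiM i j = p2M (-geomPairing M i j) - 1 := by
  set cc := -geomPairing M i j with hcc
  have e0 : ∀ t, phiM i j t 0 = (Pi.single i 1 : Fin n → ℝ) t := fun t => by simp [phiM]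
  have e1 : ∀ t, phiM i j t 1 = (Pi.single j 1 : Fin n → ℝ) t := fun t => by simp [phiM]
  have entry0 : ∀ a, (lM M i j * phiM i j) a 0 = lM M i j a i := by
    intro a
    rw [Matrix.mul_apply]
    simp only [e0]
    exact sum_single_right _ i
  have entry1 : ∀ a, (lM M i j * phiM i j) a 1 = lM M i j a j := by
    intro a
    rw [Matrix.mul_apply]
    simp only [e1]
    exact sum_single_right _ j
  have hji : geomPairing M j i = -cc := by rw [hcc, pairing_symm]; ring
  have hijv : geomPairing M i j = -cc := by rw [hcc]; ring
  ext a b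
  fin_cases b
  · rw [show (⟨0, by omega⟩ : Fin 2) = 0 from rfl, entry0]
    fin_cases a <;>
      simp [lM, p2M, hji, hijv, pairing_diag, Matrix.one_apply] <;> ring
  · rw [show (⟨1, by omega⟩ : Fin 2) = 1 from rfl, entry1]
    fin_cases a <;>
      simp [lM, p2M, hji, hijv, pairing_diag, Matrix.one_apply] <;> ring

/-- geometric series of a square matrix -/
def sGeom (P : Matrix (Fin 2) (Fin 2) ℝ) : ℕ → Matrix (Fin 2) (Fin 2) ℝ
  | 0 => 0
  | (k+1) => 1 + P * sGeom P k

theorem pow_eq_geom {A : Matrix (Fin n) (Fin n) ℝ} {φ : Matrix (Fin n) (Fin 2) ℝ}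
    {L : Matrix (Fin 2) (Fin n) ℝ} {P : Matrix (Fin 2) (Fin 2) ℝ}
    (hA : A = 1 + φ * L) (hLφ : L * φ = P - 1) (k : ℕ) :
    A ^ k = 1 + φ * sGeom P k * L := by
  have hL2 : ∀ X : Matrix (Fin 2) (Fin n) ℝ, L * (φ * X) = P * X - X := by
    intro X
    rw [← Matrix.mul_assoc, hLφ, Matrix.sub_mul, Matrix.one_mul]
  induction k with
  | zero => simp [sGeom]
  | succ k ih =>
      rw [pow_succ', ih, hA, sGeom]
      simp only [Matrix.mul_add, Matrix.add_mul, Matrix.one_mul, Matrix.mul_one,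
        Matrix.mul_assoc]
      rw [hL2 (sGeom P k * L)]
      simp only [Matrix.mul_sub]
      abel

theorem sGeom_mul (P : Matrix (Fin 2) (Fin 2) ℝ) (k : ℕ) :
    sGeom P k * (P - 1) = P ^ k - 1 := by
  induction k with
  | zero => simp [sGeom]
  | succ k ih =>
      calc sGeom P (k+1) * (P - 1) = (1 + P * sGeom P k) * (P - 1) := by rw [sGeom]
        _ = (P - 1) + P * (sGeom P k * (P - 1)) := by noncomm_ring
        _ = (P - 1) + P * (P ^ k - 1) := by rw [ih]
        _ = P ^ (k+1) - 1 := by rw [pow_succ']; noncomm_ring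

theorem p2M_sq (cc : ℝ) : p2M cc * p2M cc = (cc^2 - 2) • p2M cc - 1 := by
  ext a b
  fin_cases a <;> fin_cases b <;>
    simp [p2M, Matrix.mul_apply, Fin.sum_univ_two, Matrix.one_apply] <;> ring

theorem p2M_pow_two : p2M 0 ^ 2 = 1 := by
  rw [pow_two]
  ext a b
  fin_cases a <;> fin_cases b <;>
    simp [p2M, Matrix.mul_apply, Fin.sum_univ_two, Matrix.one_apply]

theorem p2M_pow {m : ℕ} (hm : 2 ≤ m) : p2M (2 * Real.cos (Real.pi / m)) ^ m = 1 := by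
  rcases eq_or_lt_of_le hm with hm2 | hm3
  · rw [← hm2]
    norm_num [Real.cos_pi_div_two]
    exact p2M_pow_two
  · -- m ≥ 3
    set t := Real.pi / m with htdef
    set cc := 2 * Real.cos t with hccdef
    have hmR : (3:ℝ) ≤ (m:ℝ) := by exact_mod_cast hm3
    have hm0 : (0:ℝ) < (m:ℝ) := by linarith
    have htpos : 0 < t := theta_pos hm
    have hmt : (m:ℝ) * t = Real.pi := by
      rw [htdef]; field_simp
    have h2t : 2 * t < Real.pi := by
      have h1 : 2 * (Real.pi / (m:ℝ)) = 2 * Real.pi / (m:ℝ) := by ring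
      rw [htdef, h1, div_lt_iff₀ hm0]
      nlinarith [Real.pi_pos]
    have hs2t : 0 < Real.sin (2*t) :=
      Real.sin_pos_of_pos_of_lt_pi (by linarith) h2t
    have hcc2 : cc^2 - 2 = 2 * Real.cos (2*t) := by
      rw [Real.cos_two_mul, hccdef]; ring
    have claim : ∀ k : ℕ, Real.sin (2*t) • p2M cc ^ (k+1)
        = Real.sin (2*((k:ℝ)+1)*t) • p2M cc - Real.sin (2*(k:ℝ)*t) • (1 : Matrix (Fin 2) (Fin 2) ℝ) := by
      intro k
      induction k with
      | zero => simp
      | succ k ih =>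
          have e1 : p2M cc ^ (k+1+1) = p2M cc ^ (k+1) * p2M cc := by rw [pow_succ]
          have h2 := congrArg (fun X => X * p2M cc) ih
          simp only [Matrix.smul_mul, Matrix.sub_mul, Matrix.one_mul] at h2
          rw [← e1] at h2
          rw [h2, p2M_sq, hcc2]
          have ht1 : 2*((k:ℝ)+1)*t + 2*t = 2*((k:ℝ)+1+1)*t := by ring
          have ht2 : 2*((k:ℝ)+1)*t - 2*t = 2*(k:ℝ)*t := by ring
          have h3 := trig_step (2*((k:ℝ)+1)*t) (2*t)
          rw [ht1, ht2] at h3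
          push_cast
          ext a b
          simp only [Matrix.sub_apply, Matrix.smul_apply, Matrix.one_apply, smul_eq_mul]
          rw [← h3]
          ring
    obtain ⟨k0, hk0⟩ : ∃ k0, m = k0 + 1 := ⟨m - 1, by omega⟩
    have hfinal := claim k0
    have hc1 : ((k0:ℝ)+1) = (m:ℝ) := by rw [hk0]; push_cast; ring
    have hsin1 : Real.sin (2*((k0:ℝ)+1)*t) = 0 := by
      rw [hc1, show 2*(m:ℝ)*t = 2*Real.pi by rw [← hmt]; ring, Real.sin_two_pi]
    have hsin2 : Real.sin (2*(k0:ℝ)*t) = -Real.sin (2*t) := by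
      have : 2*(k0:ℝ)*t = 2*Real.pi - 2*t := by
        have : (k0:ℝ) = (m:ℝ) - 1 := by rw [← hc1]; ring
        rw [this, ← hmt]; ring
      rw [this, Real.sin_sub, Real.sin_two_pi, Real.cos_two_pi]
      ring
    rw [hsin1, hsin2] at hfinal
    rw [← hk0] at hfinal
    have heq : Real.sin (2*t) • p2M cc ^ m = Real.sin (2*t) • (1 : Matrix (Fin 2) (Fin 2) ℝ) := by
      rw [hfinal]
      ext a b
      simp only [Matrix.sub_apply, Matrix.smul_apply, Matrix.zero_apply, smul_eq_mul,
        Matrix.one_apply]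
      ring
    exact smul_right_injective _ (ne_of_gt hs2t) heq

theorem p2M_sub_one_det (cc : ℝ) : (p2M cc - 1).det = 4 - cc^2 := by
  rw [Matrix.det_fin_two]
  simp [p2M, Matrix.one_apply]
  ring

theorem refl_prod_pow (i j : Fin n) (hij : i ≠ j) (hM : M i j ≠ 0) :
    (geomRefl M i * geomRefl M j) ^ (M i j) = 1 := by
  set m := M i j with hmdef
  have hm : 2 ≤ m := two_le_M M i j hij hM
  set t := Real.pi / m with htdef
  have hcc : -geomPairing M i j = 2 * Real.cos t := by
    simp [geomPairing, hij, ← hmdef, hM, htdef]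
  set cc := -geomPairing M i j with hccdef
  have hP : p2M cc ^ m = 1 := by rw [hcc]; exact p2M_pow hm
  have hdet : IsUnit (p2M cc - 1).det := by
    rw [p2M_sub_one_det]
    have hid : 4 - cc^2 = 4 * Real.sin t ^ 2 := by
      have h1 := Real.sin_sq_add_cos_sq t
      rw [hcc]
      nlinarith [h1]
    rw [hid]
    exact IsUnit.mk0 _ (ne_of_gt (by nlinarith [sin_theta_pos (m := m) hm]))
  have hSm : sGeom (p2M cc) m = 0 := by
    have h1 := sGeom_mul (p2M cc) m
    rw [hP, sub_self] at h1
    calc sGeom (p2M cc) m = sGeom (p2M cc) m * ((p2M cc - 1) * (p2M cc - 1)⁻¹) := by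
          rw [Matrix.mul_nonsing_inv _ hdet, Matrix.mul_one]
      _ = (sGeom (p2M cc) m * (p2M cc - 1)) * (p2M cc - 1)⁻¹ := by rw [Matrix.mul_assoc]
      _ = 0 := by rw [h1, Matrix.zero_mul]
  rw [pow_eq_geom (refl_prod_eq M i j) (by rw [lM_mul_phiM M i j hij]) m, hSm]
  simp


/-! ### Word combinatorics -/

section Words

variable {B : Type*} [DecidableEq B] {W : Type*} [Group W] {M' : CoxeterMatrix B}
  (cs : CoxeterSystem M' W)

open CoxeterSystem

theorem length_lt_of_not_chain :
    ∀ ω : List B, ¬ ω.Chain' (· ≠ ·) → cs.length (cs.wordProd ω) < ω.length := by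
  intro ω
  induction ω with
  | nil => intro h; exact absurd List.isChain_nil h
  | cons x rest ih =>
      cases rest with
      | nil => intro h; exact absurd (List.isChain_singleton x) h
      | cons y rest' =>
          intro h
          by_cases hxy : x = y
          · subst hxy
            have : cs.wordProd (x :: x :: rest') = cs.wordProd rest' := by
              rw [cs.wordProd_cons, cs.wordProd_cons, cs.simple_mul_simple_cancel_left]
            rw [this]
            calc cs.length (cs.wordProd rest') ≤ rest'.length := cs.length_wordProd_le rest'
              _ < (x :: x :: rest').length := by simp
          · have hrest : ¬ (y :: rest').Chain' (· ≠ ·) := by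
              intro hc
              exact h (List.isChain_cons_cons.mpr ⟨hxy, hc⟩)
            have h1 := ih hrest
            rw [cs.wordProd_cons]
            calc cs.length (cs.simple x * cs.wordProd (y :: rest'))
                ≤ cs.length (cs.simple x) + cs.length (cs.wordProd (y :: rest')) :=
                  cs.length_mul_le _ _
              _ ≤ 1 + cs.length (cs.wordProd (y :: rest')) := by rw [cs.length_simple]
              _ < 1 + (y :: rest').length := by omega
              _ = (x :: y :: rest').length := by simp [add_comm]

theorem alt_char (i j : B) (hij : i ≠ j) :
    ∀ ω : List B, (∀ x ∈ ω, x = i ∨ x = j) → ω.Chain' (· ≠ ·) →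
      ω = alternatingWord i j ω.length ∨ ω = alternatingWord j i ω.length := by
  intro ω
  induction ω with
  | nil => intro _ _; left; rfl
  | cons x rest ih =>
      intro hmem hchain
      have hxij : x = i ∨ x = j := hmem x (by simp)
      cases rest with
      | nil =>
          rcases hxij with rfl | rfl
          · right; rfl
          · left; rfl
      | cons y rest' =>
          have hmem' : ∀ z ∈ (y :: rest'), z = i ∨ z = j := fun z hz => hmem z (by simp [hz])
          have hchain' : (y :: rest').Chain' (· ≠ ·) := (List.isChain_cons_cons.mp hchain).2
          have hxy : x ≠ y := (List.isChain_cons_cons.mp hchain).1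
          rcases ih hmem' hchain' with halt | halt
          · -- y :: rest' = alternatingWord i j (r0+1)
            left
            have hlen : (y :: rest').length = rest'.length + 1 := by simp
            rw [hlen] at halt
            have hy : y = (if Even rest'.length then j else i) := by
              have h2 := halt.trans (alternatingWord_succ' i j rest'.length)
              exact (List.cons_eq_cons.mp h2).1
            have hx : x = (if Even (rest'.length + 1) then j else i) := by
              rcases Nat.even_or_odd rest'.length with he | ho
              · rw [if_pos he] at hy
                rw [if_neg (by simp [Nat.even_add_one, he])]
                rcases hxij with rfl | rfl
                · rfl
                · exact (hxy hy.symm).elim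
              · rw [if_neg (Nat.not_even_iff_odd.mpr ho)] at hy
                rw [if_pos (Nat.even_add_one.mpr (Nat.not_even_iff_odd.mpr ho))]
                rcases hxij with rfl | rfl
                · exact (hxy hy.symm).elim
                · rfl
            show x :: y :: rest' = alternatingWord i j ((x :: y :: rest').length)
            have : (x :: y :: rest').length = (rest'.length + 1) + 1 := by simp
            rw [this, alternatingWord_succ' i j, ← hx, halt]
          · right
            have hlen : (y :: rest').length = rest'.length + 1 := by simp
            rw [hlen] at halt
            have hy : y = (if Even rest'.length then i else j) := by
              have h2 := halt.trans (alternatingWord_succ' j i rest'.length)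
              exact (List.cons_eq_cons.mp h2).1
            have hx : x = (if Even (rest'.length + 1) then i else j) := by
              rcases Nat.even_or_odd rest'.length with he | ho
              · rw [if_pos he] at hy
                rw [if_neg (by simp [Nat.even_add_one, he])]
                rcases hxij with rfl | rfl
                · exact (hxy hy.symm).elim
                · rfl
              · rw [if_neg (Nat.not_even_iff_odd.mpr ho)] at hy
                rw [if_pos (Nat.even_add_one.mpr (Nat.not_even_iff_odd.mpr ho))]
                rcases hxij with rfl | rfl
                · rfl
                · exact (hxy hy.symm).elim
            show x :: y :: rest' = alternatingWord j i ((x :: y :: rest').length)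
            have : (x :: y :: rest').length = (rest'.length + 1) + 1 := by simp
            rw [this, alternatingWord_succ' j i, ← hx, halt]

end Words

/-! ### The geometric representation -/

open CoxeterSystem

theorem rho_wordProd (ρ : M.Group →* GL (Fin n) ℝ)
    (h : ∀ i : Fin n, (ρ (M.simple i) : Matrix (Fin n) (Fin n) ℝ) = geomRefl M i)
    (ω : List (Fin n)) :
    ((ρ (M.toCoxeterSystem.wordProd ω) : GL (Fin n) ℝ) : Matrix (Fin n) (Fin n) ℝ)
      = (ω.map (geomRefl M)).prod := by
  induction ω with
  | nil => simp [wordProd_nil]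
  | cons x rest ih =>
      rw [wordProd_cons, _root_.map_mul, List.map_cons, List.prod_cons, Units.val_mul, ih,
        CoxeterMatrix.toCoxeterSystem_simple, h x]

theorem pos_lemma (ρ : M.Group →* GL (Fin n) ℝ)
    (h : ∀ i : Fin n, (ρ (M.simple i) : Matrix (Fin n) (Fin n) ℝ) = geomRefl M i) :
    ∀ Lb : ℕ, ∀ (w : M.Group) (i : Fin n),
      M.toCoxeterSystem.length w ≤ Lb →
      M.toCoxeterSystem.length w < M.toCoxeterSystem.length (w * M.toCoxeterSystem.simple i) →
      ∀ r, 0 ≤ (((ρ w : GL (Fin n) ℝ) : Matrix (Fin n) (Fin n) ℝ) *ᵥ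
        (Pi.single i 1 : Fin n → ℝ)) r := by
  set cs := M.toCoxeterSystem with hcs
  intro Lb
  induction Lb using Nat.strong_induction_on with
  | _ Lb ih =>
  intro w i hwL hlen r
  by_cases hw1 : w = 1
  · subst hw1
    rw [_root_.map_one, Units.val_one, Matrix.one_mulVec]
    rw [Pi.single_apply]
    split <;> norm_num
  · obtain ⟨j, hj⟩ := cs.exists_rightDescent_of_ne_one hw1
    have hj' : cs.length (w * cs.simple j) < cs.length w := hj
    have hij : i ≠ j := by
      rintro rfl
      omega
    have hQ : ∃ l, ∃ (u : M.Group) (ω : List (Fin n)), cs.length u = l ∧ w = u * cs.wordProd ω ∧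
        (∀ x ∈ ω, x = i ∨ x = j) ∧ cs.length w = cs.length u + ω.length := by
      refine ⟨cs.length (w * cs.simple j), w * cs.simple j, [j], rfl, ?_, ?_, ?_⟩
      · rw [cs.wordProd_singleton, cs.simple_mul_simple_cancel_right]
      · simp
      · have hd := cs.length_mul_simple w j
        simp only [List.length_singleton]
        omega
    classical
    obtain ⟨u, ω, hul, hw, hmem, hsum⟩ := Nat.find_spec hQ
    have step : ∀ x : Fin n, (x = i ∨ x = j) →
        cs.length u < cs.length (u * cs.simple x) := by
      intro x hx
      rcases Nat.lt_or_gt_of_ne (cs.length_mul_simple_ne u x) with hlt | hgt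
      · exfalso
        have hd := cs.length_mul_simple u x
        have hval : cs.length (u * cs.simple x) < Nat.find hQ := by omega
        apply Nat.find_min hQ hval
        refine ⟨u * cs.simple x, x :: ω, rfl, ?_, ?_, ?_⟩
        · rw [cs.wordProd_cons, ← mul_assoc, cs.simple_mul_simple_cancel_right]
          exact hw
        · intro y hy
          rcases List.mem_cons.mp hy with rfl | hy'
          · exact hx
          · exact hmem y hy'
        · simp only [List.length_cons]
          omega
      · exact hgt
    have hui := step i (Or.inl rfl)
    have huj := step j (Or.inr rfl)
    have hωne : ω ≠ [] := by
      rintro rfl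
      rw [cs.wordProd_nil, mul_one] at hw
      subst hw
      omega
    have hlu : cs.length u < cs.length w := by
      have : ω.length ≠ 0 := fun hl => hωne (List.length_eq_zero_iff.mp hl)
      omega
    have hred : cs.length (cs.wordProd ω) = ω.length := by
      have h1 := cs.length_wordProd_le ω
      have h2 := cs.length_mul_le u (cs.wordProd ω)
      rw [← hw] at h2
      omega
    have hchain : ω.Chain' (· ≠ ·) := by
      by_contra hc
      have := length_lt_of_not_chain cs ω hc
      omega
    have endi : ∀ k0 : ℕ,
        cs.wordProd ω = cs.wordProd (alternatingWord i j k0) * cs.simple i →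
        k0 + 1 ≤ ω.length → False := by
      intro k0 hπ hk0
      have hcanc : w * cs.simple i = u * cs.wordProd (alternatingWord i j k0) := by
        rw [hw, hπ, ← mul_assoc, mul_assoc (u * cs.wordProd (alternatingWord i j k0)),
          cs.simple_mul_simple_self, mul_one]
      have hle : cs.length (w * cs.simple i) ≤ cs.length u + k0 := by
        rw [hcanc]
        calc cs.length (u * cs.wordProd (alternatingWord i j k0))
            ≤ cs.length u + cs.length (cs.wordProd (alternatingWord i j k0)) :=
              cs.length_mul_le _ _
          _ ≤ cs.length u + (alternatingWord i j k0).length := by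
              have := cs.length_wordProd_le (alternatingWord i j k0)
              omega
          _ = cs.length u + k0 := by rw [length_alternatingWord]
      omega
    obtain ⟨k0, hk0⟩ : ∃ k0, ω.length = k0 + 1 :=
      ⟨ω.length - 1, by have := List.length_pos_iff.mpr hωne; omega⟩
    rcases alt_char i j hij ω hmem hchain with halt | halt
    on_goal 2 =>
      exfalso
      apply endi k0 ?_ (by omega)
      rw [halt, hk0, alternatingWord_succ j i, cs.wordProd_concat]
    have hbound : M i j = 0 ∨ ω.length < M i j := by
      rcases eq_or_ne (M i j) 0 with h0 | h0
      · exact Or.inl h0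
      · right
        by_contra hge
        push_neg at hge
        rcases eq_or_lt_of_le hge with heq | hgt
        · exfalso
          have hmge : 2 ≤ M i j := two_le_M M i j hij h0
          obtain ⟨m0, hm0⟩ : ∃ m0, M i j = m0 + 1 := ⟨M i j - 1, by omega⟩
          apply endi m0 ?_ (by omega)
          rw [halt, ← heq]
          have hb := cs.wordProd_braidWord_eq i j
          unfold CoxeterSystem.braidWord at hb
          rw [hb, M.symmetric j i, hm0, alternatingWord_succ j i, cs.wordProd_concat]
        · have hnr := cs.not_isReduced_alternatingWord i j h0 hgt
          rw [← halt] at hnr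
          exact hnr hred
    have hNw : ((ρ w : GL (Fin n) ℝ) : Matrix (Fin n) (Fin n) ℝ)
        = ((ρ u : GL (Fin n) ℝ) : Matrix (Fin n) (Fin n) ℝ)
          * ((ρ (cs.wordProd ω) : GL (Fin n) ℝ) : Matrix (Fin n) (Fin n) ℝ) := by
      rw [hw, _root_.map_mul, Units.val_mul]
    rw [hNw, ← Matrix.mulVec_mulVec, rho_wordProd M ρ h ω, halt,
      alt_mulVec M i j hij ω.length, Matrix.mulVec_add, Matrix.mulVec_smul, Matrix.mulVec_smul]
    obtain ⟨hX, hY⟩ := seq_nonneg M i j hij ω.length hbound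
    have h1 := ih (cs.length u) (by omega) u i (le_refl _) hui r
    have h2 := ih (cs.length u) (by omega) u j (le_refl _) huj r
    simp only [Pi.add_apply, Pi.smul_apply, smul_eq_mul]
    exact add_nonneg (mul_nonneg hX h1) (mul_nonneg hY h2)

/-! ### Assembly -/

noncomputable def gRefl (i : Fin n) : GL (Fin n) ℝ :=
  ⟨geomRefl M i, geomRefl M i, refl_sq M i, refl_sq M i⟩

theorem gRefl_liftable : CoxeterMatrix.IsLiftable M (gRefl M) := by
  intro i j
  rcases eq_or_ne i j with rfl | hij
  · rw [M.diagonal, pow_one]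
    exact Units.ext (refl_sq M i)
  · rcases eq_or_ne (M i j) 0 with h0 | h0
    · rw [h0, pow_zero]
    · apply Units.ext
      rw [Units.val_pow_eq_pow_val, Units.val_mul]
      exact refl_prod_pow M i j hij h0

end GeomAux

/-- For any Coxeter matrix `M` on `{1,…,n}` with Coxeter group `W(M)`, there is a unique
group homomorphism `ρ : W(M) → GL_n(ℝ)` sending each simple reflection `sᵢ` to the
reflection `rᵢ`, and this geometric representation is injective (faithful). -/
theorem statement10 {n : ℕ} (M : CoxeterMatrix (Fin n)) :
    (∃! ρ : M.Group →* GL (Fin n) ℝ,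
      ∀ i : Fin n, (ρ (M.simple i) : Matrix (Fin n) (Fin n) ℝ) = geomRefl M i) ∧
    (∀ ρ : M.Group →* GL (Fin n) ℝ,
      (∀ i : Fin n, (ρ (M.simple i) : Matrix (Fin n) (Fin n) ℝ) = geomRefl M i) →
      Function.Injective ρ) := by
  open GeomAux in
  constructor
  · refine ⟨M.toCoxeterSystem.lift ⟨gRefl M, gRefl_liftable M⟩, ?_, ?_⟩
    · intro i
      rw [← CoxeterMatrix.toCoxeterSystem_simple M]
      rw [CoxeterSystem.lift_apply_simple]
      rfl
    · intro ρ' hρ'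
      apply M.toCoxeterSystem.ext_simple
      intro i
      apply Units.ext
      rw [CoxeterSystem.lift_apply_simple]
      show ((ρ' (M.toCoxeterSystem.simple i) : GL (Fin n) ℝ) : Matrix (Fin n) (Fin n) ℝ)
        = geomRefl M i
      rw [CoxeterMatrix.toCoxeterSystem_simple M]
      exact hρ' i
  · intro ρ h
    rw [injective_iff_map_eq_one]
    intro w hone
    by_contra hw1
    obtain ⟨i, hi⟩ := M.toCoxeterSystem.exists_rightDescent_of_ne_one hw1
    have hi' : M.toCoxeterSystem.length (w * M.toCoxeterSystem.simple i)
        < M.toCoxeterSystem.length w := hi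
    have hl2 : M.toCoxeterSystem.length
          ((w * M.toCoxeterSystem.simple i) * M.toCoxeterSystem.simple i)
        = M.toCoxeterSystem.length w := by
      rw [M.toCoxeterSystem.simple_mul_simple_cancel_right]
    have hpos := pos_lemma M ρ h (M.toCoxeterSystem.length (w * M.toCoxeterSystem.simple i))
      (w * M.toCoxeterSystem.simple i) i (le_refl _) (by omega) i
    have hmat : ((ρ (w * M.toCoxeterSystem.simple i) : GL (Fin n) ℝ) : Matrix (Fin n) (Fin n) ℝ)
        = geomRefl M i := by
      rw [_root_.map_mul, hone, one_mul, CoxeterMatrix.toCoxeterSystem_simple M]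
      exact h i
    rw [hmat, refl_mulVec, sum_single_right, pairing_diag] at hpos
    simp [Pi.single_apply] at hpos
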